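/- Let n ≥ 3 and let Λ ⊆ Δ_n^↓ be compact with nonempty interior relative to the hyperplane H = {x : Σ x_i = 1}. Then the majorization supremum of Λ cannot lie in the (relative) interior of Λ. -/

import Mathlib

open Finset Set

/-- Partial sum of the first `k` components. -/
def pSum {n : ℕ} (x : Fin n → ℝ) (k : ℕ) : ℝ :=
  ∑ i : Fin n, if (i : ℕ) < k then x i else 0

/-- Majorization: all partial sums of `x` are bounded by those of `y`. -/
def Maj {n : ℕ} (x y : Fin n → ℝ) : Prop :=
  ∀ k : ℕ, pSum x k ≤ pSum y k

/-- The ordered probability simplex Δ_n^↓. -/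
def OrderedSimplex (n : ℕ) : Set (Fin n → ℝ) :=
  {x | (∀ i j : Fin n, i ≤ j → x j ≤ x i) ∧ (∀ i, 0 ≤ x i) ∧ ∑ i, x i = 1}

/-- Euclidean dot product on `Fin n → ℝ`. -/
def dotp {n : ℕ} (x v : Fin n → ℝ) : ℝ := ∑ i, x i * v i

theorem stmt_15 {n : ℕ} (hn : 3 ≤ n) (Λ : Set (Fin n → ℝ)) (s : Fin n → ℝ)
    (hΛ : Λ ⊆ OrderedSimplex n) (hc : IsCompact Λ)
    (hint : ∃ x ∈ Λ, ∃ ε > (0 : ℝ), ∀ z : Fin n → ℝ,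
      (∑ i, z i = 1) → dist z x < ε → z ∈ Λ)
    (hs : s ∈ OrderedSimplex n)
    (hub : ∀ k ∈ Λ, Maj k s)
    (hlub : ∀ ρ ∈ OrderedSimplex n, (∀ k ∈ Λ, Maj k ρ) → Maj s ρ) :
    ¬ ∃ ε > (0 : ℝ), ∀ z : Fin n → ℝ,
      (∑ i, z i = 1) → dist z s < ε → z ∈ Λ := by
  rintro ⟨ε, hε, hball⟩
  have hn0 : 0 < n := by omega
  set e0 : Fin n := ⟨0, by omega⟩ with he0
  set e1 : Fin n := ⟨1, by omega⟩ with he1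
  have hne : e0 ≠ e1 := by simp [he0, he1, Fin.ext_iff]
  set δ : ℝ := ε / 2 with hδ
  have hδpos : 0 < δ := by positivity
  set z : Fin n → ℝ :=
    fun i => s i + (if i = e0 then δ else 0) - (if i = e1 then δ else 0) with hz
  have hsum : ∑ i, z i = 1 := by
    simp only [hz, Finset.sum_sub_distrib, Finset.sum_add_distrib,
      Finset.sum_ite_eq', Finset.mem_univ, if_true, hs.2.2]
    ring
  have hdist : dist z s < ε := by
    rw [dist_pi_lt_iff hε]
    intro i
    rw [Real.dist_eq]
    have h1 : z i - s i = (if i = e0 then δ else 0) - (if i = e1 then δ else 0) := by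
      simp [hz]; ring
    rw [h1]
    split_ifs <;> simp <;> first | linarith | (rw [abs_of_pos hδpos]; linarith)
  have hzΛ : z ∈ Λ := hball z hsum hdist
  have hmaj : Maj z s := hub z hzΛ
  have hp : ∀ x : Fin n → ℝ, pSum x 1 = x e0 := by
    intro x
    unfold pSum
    have : ∀ i : Fin n, (if (i : ℕ) < 1 then x i else 0) = (if i = e0 then x i else 0) := by
      intro i
      congr 1
      simp [Fin.ext_iff, Nat.lt_one_iff, he0]
    rw [Finset.sum_congr rfl (fun i _ => this i), Finset.sum_ite_eq']
    simp
  have h1 := hmaj 1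
  rw [hp z, hp s] at h1
  have : z e0 = s e0 + δ := by simp [hz, hne]
  linarith [this ▸ h1]
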